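/- For every integer n ≥ 1, the function g(z) = A_{0,2n}(z) − B_{0,2n}(z) cos z − C_{0,2n}(z) sin z has vanishing j-th derivative at z = 0 for every j ≤ 2n+1. -/

import Mathlib

open Real

/-- The polynomial `A_{0,2n}` (as a function of `z`). -/
noncomputable def A0 (n : ℕ) (z : ℝ) : ℝ :=
  ((Nat.factorial n : ℝ) ^ 2 / (Nat.factorial (2 * n) : ℝ)) *
    ∑ k ∈ Finset.range (n + 1),
      (Nat.factorial (2 * n + 2 * k) : ℝ) /
          ((Nat.factorial (n + k) : ℝ) * (Nat.factorial (n - k) : ℝ)) *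
        z ^ (2 * n - 2 * k)

/-- The polynomial `B_{0,2n}` (as a function of `z`). -/
noncomputable def B0 (n : ℕ) (z : ℝ) : ℝ :=
  ((-1 : ℝ) ^ n * (Nat.factorial n : ℝ) ^ 2 / (Nat.factorial (2 * n) : ℝ)) *
    ∑ k ∈ Finset.range (n + 1),
      (-1 : ℝ) ^ k * (Nat.factorial (2 * n + 2 * k) : ℝ) /
          ((Nat.factorial (2 * k) : ℝ) * (Nat.factorial (2 * n - 2 * k) : ℝ)) *
        (2 * z) ^ (2 * n - 2 * k)

/-- The polynomial `C_{0,2n}` (as a function of `z`). -/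
noncomputable def C0 (n : ℕ) (z : ℝ) : ℝ :=
  ((-1 : ℝ) ^ n * (Nat.factorial n : ℝ) ^ 2 / (Nat.factorial (2 * n) : ℝ)) *
    ∑ k ∈ Finset.range n,
      (-1 : ℝ) ^ (k + 1) * (Nat.factorial (2 * n + 2 * k + 1) : ℝ) /
          ((Nat.factorial (2 * k + 1) : ℝ) * (Nat.factorial (2 * n - 2 * k - 1) : ℝ)) *
        (2 * z) ^ (2 * n - 2 * k - 1)


set_option maxHeartbeats 1000000

namespace Stmt7Aux

open Polynomial PowerSeries

/-! ### Generic helpers -/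

lemma cast_factorial_succ (a : ℕ) :
    (((a+1).factorial : ℝ)) = (a+1) * (a.factorial : ℝ) := by
  rw [Nat.factorial_succ]; push_cast; ring

lemma neg_one_pow_parity (a b : ℕ) (h : a % 2 = b % 2) : (-1:ℝ)^a = (-1:ℝ)^b := by
  rcases Nat.even_or_odd a with ha | ha
  · have hb : Even b := by rw [Nat.even_iff] at *; omega
    rw [ha.neg_one_pow, hb.neg_one_pow]
  · have hb : Odd b := by
      rw [Nat.odd_iff]; rw [Nat.odd_iff] at ha; omega
    rw [ha.neg_one_pow, hb.neg_one_pow]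

/-! ### The formal power series of cos and sin -/

noncomputable def CC : ℝ⟦X⟧ := PowerSeries.cos ℝ
noncomputable def SS : ℝ⟦X⟧ := PowerSeries.sin ℝ

lemma coeff_CC (j : ℕ) : coeff j CC = if Even j then (-1)^(j/2)/(j.factorial : ℝ) else 0 := by
  rw [CC, PowerSeries.cos, coeff_mk]
  split <;> push_cast [eq_ratCast] <;> norm_num

lemma coeff_SS (j : ℕ) : coeff j SS = if Even j then 0 else (-1)^(j/2)/(j.factorial : ℝ) := by
  rw [SS, PowerSeries.sin, coeff_mk]
  split <;> push_cast [eq_ratCast] <;> norm_num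

lemma dFun_eq (f : ℝ⟦X⟧) : PowerSeries.derivativeFun f = d⁄dX ℝ f := rfl

lemma dCC : PowerSeries.derivativeFun CC = -SS := by
  ext j
  rw [dFun_eq, coeff_derivativeFun, map_neg, coeff_CC, coeff_SS]
  rcases Nat.even_or_odd j with h | h
  · have h1 : ¬ Even (j+1) := by simp [Nat.even_add_one, h]
    simp [h, h1]
  · obtain ⟨t, rfl⟩ := h
    have h1 : Even (2*t+1+1) := by rw [Nat.even_iff]; omega
    have h2 : ¬ Even (2*t+1) := by rw [Nat.even_iff]; omega
    have e1 : (2*t+1+1)/2 = t+1 := by omega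
    have e2 : (2*t+1)/2 = t := by omega
    rw [if_pos h1, if_neg h2, e1, e2]
    rw [Nat.factorial_succ]
    have : ((2*t+1).factorial : ℝ) ≠ 0 := by positivity
    field_simp
    push_cast
    ring

lemma dSS : PowerSeries.derivativeFun SS = CC := by
  ext j
  rw [dFun_eq, coeff_derivativeFun, coeff_CC, coeff_SS]
  rcases Nat.even_or_odd j with h | h
  · obtain ⟨t, ht⟩ := h
    have ht' : j = 2*t := by omega
    subst ht'
    have h1 : ¬ Even (2*t+1) := by rw [Nat.even_iff]; omega
    have h2 : Even (2*t) := by rw [Nat.even_iff]; omega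
    have e1 : (2*t+1)/2 = t := by omega
    have e2 : (2*t)/2 = t := by omega
    rw [if_neg h1, if_pos h2, e1, e2]
    rw [Nat.factorial_succ]
    have : ((2*t).factorial : ℝ) ≠ 0 := by positivity
    field_simp
    push_cast
    ring
  · have h1 : Even (j+1) := by simpa [Nat.even_add_one] using (Nat.not_even_iff_odd.mpr h)
    have h2 : ¬ Even j := Nat.not_even_iff_odd.mpr h
    simp [h1, h2]

/-! ### Triple of polynomials: formal series and real function -/

noncomputable def SER (p q r : ℝ[X]) : ℝ⟦X⟧ := (p : ℝ⟦X⟧) + (q : ℝ⟦X⟧) * CC + (r : ℝ⟦X⟧) * SS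

lemma dSER (p q r : ℝ[X]) :
    PowerSeries.derivativeFun (SER p q r)
      = SER (derivative p) (derivative q + r) (derivative r - q) := by
  rw [SER, SER, derivativeFun_add, derivativeFun_add, derivativeFun_mul, derivativeFun_mul,
    dCC, dSS, dFun_eq, dFun_eq, dFun_eq, derivativeFun_coe, derivativeFun_coe, derivativeFun_coe]
  push_cast [Polynomial.coe_add, Polynomial.coe_sub]
  simp only [smul_eq_mul]
  ring

noncomputable def FN (p q r : ℝ[X]) : ℝ → ℝ :=
  fun z => p.eval z + q.eval z * Real.cos z + r.eval z * Real.sin z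

lemma dFN (p q r : ℝ[X]) :
    deriv (FN p q r) = FN (derivative p) (derivative q + r) (derivative r - q) := by
  funext z
  have h : HasDerivAt (FN p q r)
      ((derivative p).eval z + ((derivative q).eval z * Real.cos z + q.eval z * (-Real.sin z))
        + ((derivative r).eval z * Real.sin z + r.eval z * Real.cos z)) z :=
    (((p.hasDerivAt z).add
      ((q.hasDerivAt z).mul (Real.hasDerivAt_cos z))).add
        ((r.hasDerivAt z).mul (Real.hasDerivAt_sin z)))
  rw [h.deriv, FN]
  simp only [eval_add, eval_sub]
  ring

lemma iterFN (j : ℕ) : ∀ p q r : ℝ[X],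
    iteratedDeriv j (FN p q r) 0 = (coeff j (SER p q r)) * (j.factorial : ℝ) := by
  induction j with
  | zero =>
    intro p q r
    rw [iteratedDeriv_zero]
    have hc : coeff 0 (SER p q r) = p.eval 0 + q.eval 0 := by
      have c1 : constantCoeff CC = 1 := by
        rw [← coeff_zero_eq_constantCoeff_apply, coeff_CC]; norm_num
      have s1 : constantCoeff SS = 0 := by
        rw [← coeff_zero_eq_constantCoeff_apply, coeff_SS]; norm_num
      rw [SER]
      simp only [coeff_zero_eq_constantCoeff_apply, map_add, map_mul, c1, s1,
        Polynomial.constantCoeff_coe, mul_one, mul_zero, add_zero]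
      rw [← Polynomial.coeff_zero_eq_eval_zero, ← Polynomial.coeff_zero_eq_eval_zero]
    rw [hc, FN]
    simp
  | succ j ih =>
    intro p q r
    rw [iteratedDeriv_succ', dFN, ih, ← dSER, dFun_eq, coeff_derivativeFun]
    rw [Nat.factorial_succ]
    push_cast
    ring

/-! ### The key combinatorial identity -/

lemma ring_caseA (i k d : ℕ) :
    ((i:ℝ)+k+2)*((i:ℝ)+k+4*d+3) *
      ((-1:ℝ)^i * 2^i * ((i+2*k+4*d+4).factorial : ℝ)
        / (((k+2*d+2).factorial : ℝ) * (i.factorial : ℝ) * ((k+2).factorial : ℝ)))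
    + (-1:ℝ)^i * 2^i * ((i+2*k+4*d+4).factorial : ℝ)
        / (((k+2*d+2).factorial : ℝ) * (i.factorial : ℝ) * (k.factorial : ℝ))
    = (i:ℝ)*((i:ℝ)+2*k+4*d+5) *
      ((-1:ℝ)^i * 2^i * ((i+2*k+4*d+4).factorial : ℝ)
        / (((k+2*d+2).factorial : ℝ) * (i.factorial : ℝ) * ((k+2).factorial : ℝ)))
    - ((i:ℝ)+1)*((i:ℝ)+2*k+4*d+4) *
      ((-1:ℝ)^(i+1) * 2^(i+1) * ((i+2*k+4*d+3).factorial : ℝ)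
        / (((k+2*d+1).factorial : ℝ) * ((i+1).factorial : ℝ) * ((k+1).factorial : ℝ))) := by
  have F1 : ((i+2*k+4*d+4).factorial : ℝ)
      = ((i:ℝ)+2*k+4*d+4) * ((i+2*k+4*d+3).factorial : ℝ) := by
    have : i+2*k+4*d+4 = (i+2*k+4*d+3)+1 := by omega
    rw [this, cast_factorial_succ]; push_cast; ring
  have F2 : ((k+2*d+2).factorial : ℝ) = ((k:ℝ)+2*d+2) * ((k+2*d+1).factorial : ℝ) := by
    have : k+2*d+2 = (k+2*d+1)+1 := by omega
    rw [this, cast_factorial_succ]; push_cast; ring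
  have F3 : ((k+2).factorial : ℝ) = ((k:ℝ)+2) * (((k:ℝ))+1) * (k.factorial : ℝ) := by
    have : k+2 = (k+1)+1 := by omega
    rw [this, cast_factorial_succ, cast_factorial_succ]; push_cast; ring
  have F4 : (((i+1)).factorial : ℝ) = ((i:ℝ)+1) * (i.factorial : ℝ) := by
    rw [cast_factorial_succ]
  have F5 : (((k+1)).factorial : ℝ) = ((k:ℝ)+1) * (k.factorial : ℝ) := by
    rw [cast_factorial_succ]
  rw [F1, F2, F3, F4, F5, pow_succ, pow_succ]
  have h1 : ((i+2*k+4*d+3).factorial : ℝ) ≠ 0 := by positivity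
  have h2 : ((k+2*d+1).factorial : ℝ) ≠ 0 := by positivity
  have h3 : (k.factorial : ℝ) ≠ 0 := by positivity
  have h4 : (i.factorial : ℝ) ≠ 0 := by positivity
  have h5 : ((k:ℝ)+2*d+2) ≠ 0 := by positivity
  have h6 : ((k:ℝ)+2) ≠ 0 := by positivity
  have h7 : ((k:ℝ)+1) ≠ 0 := by positivity
  have h8 : ((i:ℝ)+1) ≠ 0 := by positivity
  field_simp
  ring

lemma ring_caseB (m d : ℕ) :
    2*((m:ℝ)+1)*(2*(m:ℝ)+4*d+3) *
      ((-1:ℝ)^(2*m+1) * 2^(2*m+1) * ((2*m+4*d+3).factorial : ℝ)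
        / (((2*d+1).factorial : ℝ) * ((2*m+1).factorial : ℝ) * ((1:ℕ).factorial : ℝ)))
    = (2*(m:ℝ)+1)*(2*(m:ℝ)+4*d+4) *
      ((-1:ℝ)^(2*m+1) * 2^(2*m+1) * ((2*m+4*d+3).factorial : ℝ)
        / (((2*d+1).factorial : ℝ) * ((2*m+1).factorial : ℝ) * ((1:ℕ).factorial : ℝ)))
    - (2*(m:ℝ)+2)*(2*(m:ℝ)+4*d+3) *
      ((-1:ℝ)^(2*m+2) * 2^(2*m+2) * ((2*m+4*d+2).factorial : ℝ)
        / (((2*d).factorial : ℝ) * ((2*m+2).factorial : ℝ) * ((0:ℕ).factorial : ℝ))) := by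
  have F1 : ((2*m+4*d+3).factorial : ℝ) = (2*(m:ℝ)+4*d+3) * ((2*m+4*d+2).factorial : ℝ) := by
    have : 2*m+4*d+3 = (2*m+4*d+2)+1 := by omega
    rw [this, cast_factorial_succ]; push_cast; ring
  have F2 : ((2*d+1).factorial : ℝ) = (2*(d:ℝ)+1) * ((2*d).factorial : ℝ) := by
    have : 2*d+1 = (2*d)+1 := by omega
    rw [this, cast_factorial_succ]; push_cast; ring
  have F3 : ((2*m+2).factorial : ℝ) = (2*(m:ℝ)+2) * ((2*m+1).factorial : ℝ) := by
    have : 2*m+2 = (2*m+1)+1 := by omega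
    rw [this, cast_factorial_succ]; push_cast; ring
  have P1 : (-1:ℝ)^(2*m+2) = (-1)^(2*m+1) * (-1) := by rw [pow_succ]
  have P2 : (2:ℝ)^(2*m+2) = 2^(2*m+1) * 2 := by rw [pow_succ]
  rw [F1, F2, F3, P1, P2, Nat.factorial_one, Nat.factorial_zero]
  have h1 : ((2*m+4*d+2).factorial : ℝ) ≠ 0 := by positivity
  have h2 : ((2*d).factorial : ℝ) ≠ 0 := by positivity
  have h3 : ((2*m+1).factorial : ℝ) ≠ 0 := by positivity
  have h5 : (2*(d:ℝ)+1) ≠ 0 := by positivity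
  have h6 : (2*(m:ℝ)+2) ≠ 0 := by positivity
  field_simp
  ring

noncomputable def Fc (n m i : ℕ) : ℝ :=
  if i ≤ 2*m then
    (-1:ℝ)^i * 2^i * ((4*n-i).factorial : ℝ)
      / (((2*n-i).factorial : ℝ) * (i.factorial : ℝ) * ((2*m-i).factorial : ℝ))
  else 0

lemma step_i (n m i : ℕ) (h : m+1 ≤ n) (hi : i ≤ 2*m+2) :
    2*((m:ℝ)+1)*(4*(n:ℝ)-2*(m:ℝ)-1) * Fc n (m+1) i + Fc n m i
      = (i:ℝ)*(4*(n:ℝ)+1-(i:ℝ)) * Fc n (m+1) i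
        - (((i:ℝ)+1))*(4*(n:ℝ)+1-((i:ℝ)+1)) * Fc n (m+1) (i+1) := by
  obtain ⟨d, hd⟩ : ∃ d, n = m+1+d := ⟨n-(m+1), by omega⟩
  rcases Nat.lt_or_ge i (2*m+1) with hc | hc
  · have hik : i ≤ 2*m := by omega
    obtain ⟨k, hk⟩ : ∃ k, 2*m = i+k := ⟨2*m-i, by omega⟩
    rw [Fc, Fc, Fc, if_pos hik, if_pos (by omega : i ≤ 2*(m+1)), if_pos (by omega : i+1 ≤ 2*(m+1))]
    have e1 : 4*n-i = i+2*k+4*d+4 := by omega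
    have e2 : 2*n-i = k+2*d+2 := by omega
    have e3 : 2*m-i = k := by omega
    have e4 : 2*(m+1)-i = k+2 := by omega
    have e5 : 4*n-(i+1) = i+2*k+4*d+3 := by omega
    have e6 : 2*n-(i+1) = k+2*d+1 := by omega
    have e7 : 2*(m+1)-(i+1) = k+1 := by omega
    rw [e1, e2, e3, e4, e5, e6, e7]
    have hmr : (m:ℝ) = ((i:ℝ)+(k:ℝ))/2 := by
      have : ((2*m : ℕ) : ℝ) = ((i+k : ℕ) : ℝ) := by exact_mod_cast congrArg (Nat.cast (R := ℝ)) hk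
      push_cast at this; linarith
    have hnr : (n:ℝ) = ((i:ℝ)+(k:ℝ))/2 + 1 + (d:ℝ) := by
      have : ((n : ℕ) : ℝ) = ((m+1+d : ℕ) : ℝ) := by exact_mod_cast congrArg (Nat.cast (R := ℝ)) hd
      push_cast at this; rw [this, hmr]
    rw [hmr, hnr]
    linear_combination ring_caseA i k d
  · rcases Nat.eq_or_lt_of_le hc with hc1 | hc2
    · have hi' : i = 2*m+1 := by omega
      subst hi'
      rw [Fc, Fc, Fc, if_pos (by omega : 2*m+1 ≤ 2*(m+1)),
        if_neg (by omega : ¬ (2*m+1 ≤ 2*m)), if_pos (by omega : 2*m+1+1 ≤ 2*(m+1))]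
      have e1 : 4*n-(2*m+1) = 2*m+4*d+3 := by omega
      have e2 : 2*n-(2*m+1) = 2*d+1 := by omega
      have e4 : 2*(m+1)-(2*m+1) = 1 := by omega
      have e5 : 4*n-(2*m+1+1) = 2*m+4*d+2 := by omega
      have e6 : 2*n-(2*m+1+1) = 2*d := by omega
      have e7 : 2*(m+1)-(2*m+1+1) = 0 := by omega
      rw [e1, e2, e4, e5, e6, e7]
      have hnr : (n:ℝ) = (m:ℝ) + 1 + (d:ℝ) := by
        have : ((n : ℕ) : ℝ) = ((m+1+d : ℕ) : ℝ) := by exact_mod_cast congrArg (Nat.cast (R := ℝ)) hd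
        push_cast at this; linarith
      rw [hnr]
      push_cast
      linear_combination ring_caseB m d
    · have hi' : i = 2*m+2 := by omega
      subst hi'
      rw [Fc, Fc, Fc, if_pos (by omega : 2*m+2 ≤ 2*(m+1)),
        if_neg (by omega : ¬ (2*m+2 ≤ 2*m)), if_neg (by omega : ¬ (2*m+2+1 ≤ 2*(m+1)))]
      push_cast
      ring

lemma recur (n m : ℕ) (h : m+1 ≤ n) :
    2*((m:ℝ)+1)*(4*(n:ℝ)-2*(m:ℝ)-1) * (∑ i ∈ Finset.range (2*(m+1)+1), Fc n (m+1) i)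
      + (∑ i ∈ Finset.range (2*m+1), Fc n m i) = 0 := by
  have hs1 : ∑ i ∈ Finset.range (2*m+1), Fc n m i = ∑ i ∈ Finset.range (2*m+3), Fc n m i := by
    have z1 : Fc n m (2*m+1) = 0 := by rw [Fc, if_neg (by omega)]
    have z2 : Fc n m (2*m+2) = 0 := by rw [Fc, if_neg (by omega)]
    have A1 : ∑ i ∈ Finset.range (2*m+3), Fc n m i
        = ∑ i ∈ Finset.range (2*m+2), Fc n m i + Fc n m (2*m+2) := by
      rw [show 2*m+3 = (2*m+2)+1 from by omega]; exact Finset.sum_range_succ _ _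
    have A2 : ∑ i ∈ Finset.range (2*m+2), Fc n m i
        = ∑ i ∈ Finset.range (2*m+1), Fc n m i + Fc n m (2*m+1) := by
      rw [show 2*m+2 = (2*m+1)+1 from by omega]; exact Finset.sum_range_succ _ _
    rw [A1, A2, z1, z2]
    ring
  have e2 : 2*(m+1)+1 = 2*m+3 := by omega
  rw [hs1, e2, Finset.mul_sum, ← Finset.sum_add_distrib]
  have tele := Finset.sum_range_sub' (f := fun i => (i:ℝ)*(4*(n:ℝ)+1-(i:ℝ)) * Fc n (m+1) i) (2*m+3)
  have zz : Fc n (m+1) (2*m+3) = 0 := by rw [Fc, if_neg (by omega)]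
  have congrs : ∑ i ∈ Finset.range (2*m+3),
      (2*((m:ℝ)+1)*(4*(n:ℝ)-2*(m:ℝ)-1) * Fc n (m+1) i + Fc n m i)
      = ∑ i ∈ Finset.range (2*m+3),
        ((fun i : ℕ => (i:ℝ)*(4*(n:ℝ)+1-(i:ℝ)) * Fc n (m+1) i) i
          - (fun i : ℕ => (i:ℝ)*(4*(n:ℝ)+1-(i:ℝ)) * Fc n (m+1) i) (i+1)) := by
    refine Finset.sum_congr rfl (fun i hi => ?_)
    have hi' : i ≤ 2*m+2 := by
      have := Finset.mem_range.mp hi; omega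
    have := step_i n m i h hi'
    simp only []
    push_cast
    push_cast at this
    linarith [this]
  rw [congrs, tele, zz]
  norm_num

lemma key (n : ℕ) : ∀ m, m ≤ n → ∑ i ∈ Finset.range (2*m+1), Fc n m i
    = (-1:ℝ)^m * ((4*n-2*m).factorial : ℝ) / (((2*n-m).factorial : ℝ) * (m.factorial : ℝ)) := by
  intro m
  induction m with
  | zero =>
    intro _
    rw [show 2*0+1 = 1 from rfl, Finset.sum_range_one, Fc, if_pos (by omega)]
    norm_num
  | succ m ih =>
    intro hm1
    have hm : m ≤ n := by omega
    have IH := ih hm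
    have R := recur n m hm1
    rw [IH] at R
    obtain ⟨d, hd⟩ : ∃ d, n = m+1+d := ⟨n-(m+1), by omega⟩
    have e1 : 4*n-2*m = 2*m+4*d+4 := by omega
    have e2 : 2*n-m = m+2*d+2 := by omega
    have e3 : 4*n-2*(m+1) = 2*m+4*d+2 := by omega
    have e4 : 2*n-(m+1) = m+2*d+1 := by omega
    rw [e1, e2] at R
    rw [e3, e4]
    have hnr : (n:ℝ) = (m:ℝ) + 1 + (d:ℝ) := by
      have : ((n : ℕ) : ℝ) = ((m+1+d : ℕ) : ℝ) := by exact_mod_cast congrArg (Nat.cast (R := ℝ)) hd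
      push_cast at this; linarith
    rw [hnr] at R
    have ha : 2*((m:ℝ)+1)*(4*((m:ℝ)+1+(d:ℝ))-2*(m:ℝ)-1) ≠ 0 := by
      have h1 : (0:ℝ) < 2*((m:ℝ)+1) := by positivity
      have h2 : (0:ℝ) < 4*((m:ℝ)+1+(d:ℝ))-2*(m:ℝ)-1 := by
        have hm0 : (0:ℝ) ≤ (m:ℝ) := Nat.cast_nonneg m
        have hd0 : (0:ℝ) ≤ (d:ℝ) := Nat.cast_nonneg d
        nlinarith
      positivity
    have hS : ∑ i ∈ Finset.range (2*(m+1)+1), Fc n (m+1) i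
        = - ((-1:ℝ)^m * ((2*m+4*d+4).factorial : ℝ)
            / (((m+2*d+2).factorial : ℝ) * (m.factorial : ℝ)))
          / (2*((m:ℝ)+1)*(4*((m:ℝ)+1+(d:ℝ))-2*(m:ℝ)-1)) := by
      rw [eq_div_iff ha]
      linarith [R]
    rw [hS]
    have F1 : ((2*m+4*d+4).factorial : ℝ)
        = (2*(m:ℝ)+4*d+4) * (2*(m:ℝ)+4*d+3) * ((2*m+4*d+2).factorial : ℝ) := by
      rw [show 2*m+4*d+4 = (2*m+4*d+3)+1 from by omega, cast_factorial_succ,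
        show 2*m+4*d+3 = (2*m+4*d+2)+1 from by omega, cast_factorial_succ]
      push_cast; ring
    have F2 : ((m+2*d+2).factorial : ℝ) = ((m:ℝ)+2*d+2) * ((m+2*d+1).factorial : ℝ) := by
      rw [show m+2*d+2 = (m+2*d+1)+1 from by omega, cast_factorial_succ]; push_cast; ring
    have F3 : (((m+1)).factorial : ℝ) = ((m:ℝ)+1) * (m.factorial : ℝ) := by
      rw [cast_factorial_succ]
    rw [F1, F2, F3, pow_succ]
    have h1 : ((2*m+4*d+2).factorial : ℝ) ≠ 0 := by positivity
    have h2 : ((m+2*d+1).factorial : ℝ) ≠ 0 := by positivity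
    have h3 : (m.factorial : ℝ) ≠ 0 := by positivity
    have h4 : ((m:ℝ)+2*d+2) ≠ 0 := by positivity
    have h5 : ((m:ℝ)+1) ≠ 0 := by positivity
    have h6 : (2*(m:ℝ)+4*d+3) ≠ 0 := by positivity
    rw [show 4*((m:ℝ)+1+(d:ℝ))-2*(m:ℝ)-1 = 2*(m:ℝ)+4*d+3 by ring]
    field_simp
    ring

/-! ### The three polynomials -/

noncomputable def cA (n : ℕ) : ℝ := ((n.factorial:ℝ)^2 / (((2*n).factorial) : ℝ))

noncomputable def Ap (n : ℕ) : ℝ[X] :=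
  Polynomial.C (cA n) * ∑ k ∈ Finset.range (n+1),
    Polynomial.C (((2*n+2*k).factorial : ℝ) / (((n+k).factorial:ℝ) * ((n-k).factorial:ℝ)))
      * Polynomial.X^(2*n-2*k)

noncomputable def Bp (n : ℕ) : ℝ[X] :=
  Polynomial.C ((-1:ℝ)^n * cA n) * ∑ k ∈ Finset.range (n+1),
    Polynomial.C ((-1:ℝ)^k * ((2*n+2*k).factorial : ℝ)
        / (((2*k).factorial:ℝ) * ((2*n-2*k).factorial:ℝ)))
      * (Polynomial.C (2:ℝ) * Polynomial.X)^(2*n-2*k)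

noncomputable def Cp (n : ℕ) : ℝ[X] :=
  Polynomial.C ((-1:ℝ)^n * cA n) * ∑ k ∈ Finset.range n,
    Polynomial.C ((-1:ℝ)^(k+1) * ((2*n+2*k+1).factorial : ℝ)
        / (((2*k+1).factorial:ℝ) * ((2*n-2*k-1).factorial:ℝ)))
      * (Polynomial.C (2:ℝ) * Polynomial.X)^(2*n-2*k-1)

lemma coeff_term (b : ℝ) (e u : ℕ) :
    (Polynomial.C b * (Polynomial.C (2:ℝ) * Polynomial.X)^e).coeff u
      = b * 2^e * (if u = e then 1 else 0) := by
  rw [mul_pow, ← map_pow, ← mul_assoc, ← Polynomial.C_mul, Polynomial.coeff_C_mul,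
    Polynomial.coeff_X_pow]

lemma coeff_termX (b : ℝ) (e u : ℕ) :
    (Polynomial.C b * Polynomial.X^e).coeff u = b * (if u = e then 1 else 0) := by
  rw [Polynomial.coeff_C_mul, Polynomial.coeff_X_pow]

lemma coeff_Ap_even (n m : ℕ) (hm : m ≤ n) :
    (Ap n).coeff (2*m)
      = cA n * (((4*n-2*m).factorial : ℝ) / (((2*n-m).factorial:ℝ) * (m.factorial:ℝ))) := by
  rw [Ap, Polynomial.coeff_C_mul, Polynomial.finset_sum_coeff]
  rw [Finset.sum_eq_single_of_mem (n-m) (Finset.mem_range.mpr (by omega))]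
  · rw [coeff_termX, if_pos (by omega : 2*m = 2*n-2*(n-m))]
    rw [show 2*n+2*(n-m) = 4*n-2*m from by omega, show n+(n-m) = 2*n-m from by omega,
      show n-(n-m) = m from by omega]
    ring
  · intro k hk hne
    rw [coeff_termX, if_neg (by
      have := Finset.mem_range.mp hk
      omega)]
    ring

lemma coeff_Ap_odd (n j : ℕ) (hj : j % 2 = 1) : (Ap n).coeff j = 0 := by
  rw [Ap, Polynomial.coeff_C_mul, Polynomial.finset_sum_coeff]
  rw [Finset.sum_eq_zero]
  · ring
  · intro k hk
    rw [coeff_termX, if_neg (by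
      have := Finset.mem_range.mp hk
      omega)]
    ring

lemma coeff_Bp_even (n s : ℕ) (hs : s ≤ n) :
    (Bp n).coeff (2*s)
      = (-1:ℝ)^n * cA n * ((-1:ℝ)^(n-s) * ((4*n-2*s).factorial : ℝ)
          / (((2*n-2*s).factorial:ℝ) * ((2*s).factorial:ℝ))) * 2^(2*s) := by
  rw [Bp, Polynomial.coeff_C_mul, Polynomial.finset_sum_coeff]
  rw [Finset.sum_eq_single_of_mem (n-s) (Finset.mem_range.mpr (by omega))]
  · rw [coeff_term, if_pos (by omega : 2*s = 2*n-2*(n-s))]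
    rw [show 2*n+2*(n-s) = 4*n-2*s from by omega, show 2*n-2*(n-s) = 2*s from by omega,
      show 2*(n-s) = 2*n-2*s from by omega]
    ring
  · intro k hk hne
    rw [coeff_term, if_neg (by
      have := Finset.mem_range.mp hk
      omega)]
    ring

lemma coeff_Bp_odd (n j : ℕ) (hj : j % 2 = 1) : (Bp n).coeff j = 0 := by
  rw [Bp, Polynomial.coeff_C_mul, Polynomial.finset_sum_coeff]
  rw [Finset.sum_eq_zero]
  · ring
  · intro k hk
    rw [coeff_term, if_neg (by
      have := Finset.mem_range.mp hk
      omega)]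
    ring

lemma coeff_Cp_odd (n s : ℕ) (hs : s+1 ≤ n) :
    (Cp n).coeff (2*s+1)
      = (-1:ℝ)^n * cA n * ((-1:ℝ)^((n-s-1)+1) * ((4*n-2*s-1).factorial : ℝ)
          / (((2*n-2*s-1).factorial:ℝ) * ((2*s+1).factorial:ℝ))) * 2^(2*s+1) := by
  rw [Cp, Polynomial.coeff_C_mul, Polynomial.finset_sum_coeff]
  rw [Finset.sum_eq_single_of_mem (n-s-1) (Finset.mem_range.mpr (by omega))]
  · rw [coeff_term, if_pos (by omega : 2*s+1 = 2*n-2*(n-s-1)-1)]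
    rw [show 2*n+2*(n-s-1)+1 = 4*n-2*s-1 from by omega,
      show 2*n-2*(n-s-1)-1 = 2*s+1 from by omega,
      show 2*(n-s-1)+1 = 2*n-2*s-1 from by omega]
    ring
  · intro k hk hne
    rw [coeff_term, if_neg (by
      have := Finset.mem_range.mp hk
      omega)]
    ring

lemma coeff_Cp_even (n j : ℕ) (hj : j % 2 = 0) : (Cp n).coeff j = 0 := by
  rw [Cp, Polynomial.coeff_C_mul, Polynomial.finset_sum_coeff]
  rw [Finset.sum_eq_zero]
  · ring
  · intro k hk
    rw [coeff_term, if_neg (by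
      have := Finset.mem_range.mp hk
      omega)]
    ring

/-! ### The coefficient identity -/

lemma termEq (n m u : ℕ) (hm : m ≤ n) (hu : u ≤ 2*m) :
    (Bp n).coeff u * (PowerSeries.coeff (2*m-u) CC)
      + (Cp n).coeff u * (PowerSeries.coeff (2*m-u) SS)
      = cA n * (-1:ℝ)^m * Fc n m u := by
  rcases Nat.even_or_odd u with hev | hod
  · obtain ⟨s, hs⟩ := hev
    have hu2 : u = 2*s := by omega
    subst hu2
    have hsn : s ≤ n := by omega
    rw [coeff_Bp_even n s hsn, coeff_Cp_even n (2*s) (by omega), coeff_CC, coeff_SS]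
    have hev2 : Even (2*m-2*s) := by rw [Nat.even_iff]; omega
    rw [if_pos hev2, if_pos hev2, Fc, if_pos hu,
      show (2*m-2*s)/2 = m-s from by omega]
    have hsign : (-1:ℝ)^n * (-1:ℝ)^(n-s) * (-1:ℝ)^(m-s) = (-1:ℝ)^m * (-1:ℝ)^(2*s) := by
      rw [← pow_add, ← pow_add, ← pow_add]
      exact neg_one_pow_parity _ _ (by omega)
    linear_combination (cA n * (((4*n-2*s).factorial:ℝ)) * 2^(2*s)
      / ((((2*n-2*s).factorial:ℝ)) * (((2*s).factorial:ℝ)) * (((2*m-2*s).factorial:ℝ)))) * hsign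
  · obtain ⟨s, hs⟩ := hod
    subst hs
    have hsm : s+1 ≤ m := by omega
    rw [coeff_Bp_odd n (2*s+1) (by omega), coeff_Cp_odd n s (by omega), coeff_CC, coeff_SS]
    have hod2 : ¬ Even (2*m-(2*s+1)) := by rw [Nat.even_iff]; omega
    rw [if_neg hod2, if_neg hod2, Fc, if_pos hu,
      show (2*m-(2*s+1))/2 = m-s-1 from by omega,
      show 4*n-(2*s+1) = 4*n-2*s-1 from by omega,
      show 2*n-(2*s+1) = 2*n-2*s-1 from by omega,
      show 2*m-(2*s+1) = 2*m-2*s-1 from by omega]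
    have hsign : (-1:ℝ)^n * (-1:ℝ)^((n-s-1)+1) * (-1:ℝ)^(m-s-1)
        = (-1:ℝ)^m * (-1:ℝ)^(2*s+1) := by
      rw [← pow_add, ← pow_add, ← pow_add]
      exact neg_one_pow_parity _ _ (by omega)
    linear_combination (cA n * (((4*n-2*s-1).factorial:ℝ)) * 2^(2*s+1)
      / ((((2*n-2*s-1).factorial:ℝ)) * (((2*s+1).factorial:ℝ)) * (((2*m-2*s-1).factorial:ℝ)))) * hsign

lemma coeff_BC_even (n m : ℕ) (hm : m ≤ n) :
    PowerSeries.coeff (2*m) ((Bp n : ℝ⟦X⟧) * CC + (Cp n : ℝ⟦X⟧) * SS)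
      = (Ap n).coeff (2*m) := by
  rw [map_add, PowerSeries.coeff_mul, PowerSeries.coeff_mul,
    Finset.Nat.sum_antidiagonal_eq_sum_range_succ_mk,
    Finset.Nat.sum_antidiagonal_eq_sum_range_succ_mk, ← Finset.sum_add_distrib]
  have hterm : ∀ u ∈ Finset.range (2*m+1),
      PowerSeries.coeff u ((Bp n : ℝ⟦X⟧)) * PowerSeries.coeff (2*m-u) CC
        + PowerSeries.coeff u ((Cp n : ℝ⟦X⟧)) * PowerSeries.coeff (2*m-u) SS
      = cA n * (-1:ℝ)^m * Fc n m u := by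
    intro u hu
    rw [Polynomial.coeff_coe, Polynomial.coeff_coe]
    exact termEq n m u hm (by have := Finset.mem_range.mp hu; omega)
  rw [Finset.sum_congr rfl hterm, ← Finset.mul_sum, key n m hm, coeff_Ap_even n m hm]
  have hsq : (-1:ℝ)^m * (-1:ℝ)^m = 1 := by
    rw [← pow_add]
    exact Even.neg_one_pow ⟨m, by ring⟩
  field_simp
  linear_combination (cA n) * hsq

lemma coeff_BC_odd (n j : ℕ) (hj : j % 2 = 1) :
    PowerSeries.coeff j ((Bp n : ℝ⟦X⟧) * CC + (Cp n : ℝ⟦X⟧) * SS) = 0 := by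
  rw [map_add, PowerSeries.coeff_mul, PowerSeries.coeff_mul,
    Finset.Nat.sum_antidiagonal_eq_sum_range_succ_mk,
    Finset.Nat.sum_antidiagonal_eq_sum_range_succ_mk, ← Finset.sum_add_distrib]
  apply Finset.sum_eq_zero
  intro u hu
  have hur := Finset.mem_range.mp hu
  rw [Polynomial.coeff_coe, Polynomial.coeff_coe, coeff_CC, coeff_SS]
  rcases Nat.mod_two_eq_zero_or_one u with he | he
  · have h1 : ¬ Even (j-u) := by rw [Nat.even_iff]; omega
    rw [if_neg h1, if_neg h1, coeff_Cp_even n u he]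
    ring
  · have h1 : Even (j-u) := by rw [Nat.even_iff]; omega
    rw [if_pos h1, if_pos h1, coeff_Bp_odd n u he]
    ring

lemma coeff_total (n j : ℕ) (hj : j ≤ 2*n+1) :
    PowerSeries.coeff j (SER (Ap n) (-(Bp n)) (-(Cp n))) = 0 := by
  have hser : SER (Ap n) (-(Bp n)) (-(Cp n))
      = (Ap n : ℝ⟦X⟧) - ((Bp n : ℝ⟦X⟧) * CC + (Cp n : ℝ⟦X⟧) * SS) := by
    rw [SER]
    push_cast [Polynomial.coe_neg]
    ring
  rw [hser, map_sub, Polynomial.coeff_coe]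
  rcases Nat.even_or_odd j with he | ho
  · obtain ⟨m, hm⟩ := he
    have hj2 : j = 2*m := by omega
    subst hj2
    rw [coeff_BC_even n m (by omega), sub_self]
  · rw [Nat.odd_iff] at ho
    rw [coeff_BC_odd n j ho, coeff_Ap_odd n j ho, sub_zero]

end Stmt7Aux

theorem stmt7 (n : ℕ) (hn : 1 ≤ n) :
    ∀ j : ℕ, j ≤ 2 * n + 1 →
      iteratedDeriv j (fun z : ℝ => A0 n z - B0 n z * Real.cos z - C0 n z * Real.sin z) 0 = 0 := by
  intro j hj
  have hA : ∀ z : ℝ, A0 n z = (Stmt7Aux.Ap n).eval z := by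
    intro z
    rw [A0, Stmt7Aux.Ap, Stmt7Aux.cA]
    simp only [Polynomial.eval_mul, Polynomial.eval_C, Polynomial.eval_finset_sum,
      Polynomial.eval_pow, Polynomial.eval_X]
  have hB : ∀ z : ℝ, B0 n z = (Stmt7Aux.Bp n).eval z := by
    intro z
    rw [B0, Stmt7Aux.Bp, Stmt7Aux.cA]
    simp only [Polynomial.eval_mul, Polynomial.eval_C, Polynomial.eval_finset_sum,
      Polynomial.eval_pow, Polynomial.eval_X]
    rw [Finset.mul_sum, Finset.mul_sum]
    refine Finset.sum_congr rfl (fun k _ => ?_)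
    ring
  have hC : ∀ z : ℝ, C0 n z = (Stmt7Aux.Cp n).eval z := by
    intro z
    rw [C0, Stmt7Aux.Cp, Stmt7Aux.cA]
    simp only [Polynomial.eval_mul, Polynomial.eval_C, Polynomial.eval_finset_sum,
      Polynomial.eval_pow, Polynomial.eval_X]
    rw [Finset.mul_sum, Finset.mul_sum]
    refine Finset.sum_congr rfl (fun k _ => ?_)
    ring
  have hfun : (fun z : ℝ => A0 n z - B0 n z * Real.cos z - C0 n z * Real.sin z)
      = Stmt7Aux.FN (Stmt7Aux.Ap n) (-(Stmt7Aux.Bp n)) (-(Stmt7Aux.Cp n)) := by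
    funext z
    rw [Stmt7Aux.FN, hA z, hB z, hC z]
    simp only [Polynomial.eval_neg]
    ring
  rw [hfun, Stmt7Aux.iterFN, Stmt7Aux.coeff_total n j hj, zero_mul]
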